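/- Let α be a simple multisegment and β any multisegment such that α ≤ β and α~ ≤ β~ (where ~ denotes the Zelevinsky involution). Then α = β. -/

import Mathlib

/-- A finite multiset of integer pairs `(b, e)` is a multisegment if each pair
satisfies `b ≤ e`; the pair `(b, e)` encodes the segment `{b, b+1, …, e}`. -/
def IsMultisegment (α : Multiset (ℤ × ℤ)) : Prop := ∀ p ∈ α, p.1 ≤ p.2

/-- The length `e - b + 1` of the segment `(b, e)`. -/
def segLen (p : ℤ × ℤ) : ℕ := (p.2 - p.1 + 1).toNat

/-- `L_α`: the maximal length of a segment of `α`. -/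
def maxLen (α : Multiset (ℤ × ℤ)) : ℕ := (α.map segLen).sup

/-- The union of the segments `p` and `q` is a segment strictly containing both. -/
def Linked (p q : ℤ × ℤ) : Prop :=
  q.1 ≤ p.2 + 1 ∧ p.1 ≤ q.2 + 1 ∧
    (min p.1 q.1, max p.2 q.2) ≠ p ∧ (min p.1 q.1, max p.2 q.2) ≠ q

/-- The intersection of two segments, as a multiset (empty if the segments are disjoint). -/
def interMS (p q : ℤ × ℤ) : Multiset (ℤ × ℤ) :=
  if max p.1 q.1 ≤ min p.2 q.2 then {(max p.1 q.1, min p.2 q.2)} else 0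

/-- An elementary operation replaces two segments whose union is a segment strictly
containing both by their union and (if nonempty) their intersection. -/
def ElemStep (α β : Multiset (ℤ × ℤ)) : Prop :=
  ∃ p q rest, α = p ::ₘ q ::ₘ rest ∧ Linked p q ∧
    β = (min p.1 q.1, max p.2 q.2) ::ₘ (interMS p q + rest)

/-- The partial order on multisegments: `α ≤ β` iff `β` is obtained from `α` by
a finite (possibly empty) sequence of elementary operations. -/
def msLE (α β : Multiset (ℤ × ℤ)) : Prop := Relation.ReflTransGen ElemStep α β

/-- Mœglin–Waldspurger: the chain `Δ_e, Δ_{e-1}, …, Δ_m` starting from `Δ`,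
where at each step we pass to a segment of `α` with end value one less, preceding
the current segment, and with maximal base value (fuel-driven recursion). -/
def mwChainAux : ℕ → Multiset (ℤ × ℤ) → ℤ × ℤ → List (ℤ × ℤ)
  | 0, _, Δ => [Δ]
  | n + 1, α, Δ =>
    let s := ((α.filter (fun p => p.2 = Δ.2 - 1 ∧ p.1 < Δ.1)).map Prod.fst).toFinset
    if h : s.Nonempty then Δ :: mwChainAux n α (s.max' h, Δ.2 - 1) else [Δ]

/-- The Mœglin–Waldspurger chain `Δ_e, Δ_{e-1}, …, Δ_m` of `α`: here `e` is the largest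
end value of a segment of `α` and `Δ_e` has maximal base value among segments with
end value `e`. -/
def mwChain (α : Multiset (ℤ × ℤ)) : List (ℤ × ℤ) :=
  let ends := (α.map Prod.snd).toFinset
  if h : ends.Nonempty then
    let e := ends.max' h
    let bases := ((α.filter (fun p => p.2 = e)).map Prod.fst).toFinset
    if hb : bases.Nonempty then mwChainAux α.card α (bases.max' hb, e) else []
  else []

/-- `M(α) = [m, e]`. -/
def mwSegment (α : Multiset (ℤ × ℤ)) : ℤ × ℤ :=
  (((mwChain α).getLastD (0, 0)).2, ((mwChain α).headD (0, 0)).2)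

/-- Delete the end value from a segment, discarding the segment if it becomes empty. -/
def mwShrink (p : ℤ × ℤ) : Multiset (ℤ × ℤ) :=
  if p.1 ≤ p.2 - 1 then {(p.1, p.2 - 1)} else 0

/-- `α ∖ M(α)`: delete the integer `i` from the segment `Δ_i` for each `m ≤ i ≤ e`. -/
def mwResidual (α : Multiset (ℤ × ℤ)) : Multiset (ℤ × ℤ) :=
  (α - ↑(mwChain α)) + (↑(mwChain α) : Multiset (ℤ × ℤ)).bind mwShrink

/-- The total number of integers occurring in the segments of `α` (with multiplicity). -/
def msSize (α : Multiset (ℤ × ℤ)) : ℕ := (α.map segLen).sum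

def tildeAux : ℕ → Multiset (ℤ × ℤ) → Multiset (ℤ × ℤ)
  | 0, _ => 0
  | n + 1, α => if α = 0 then 0 else mwSegment α ::ₘ tildeAux n (mwResidual α)

/-- The Zelevinsky involution `α ↦ α~`, computed by the Mœglin–Waldspurger algorithm:
`∅~ = ∅` and `α~ = {M(α)} ⊎ (α ∖ M(α))~`. -/
def tilde (α : Multiset (ℤ × ℤ)) : Multiset (ℤ × ℤ) := tildeAux (msSize α) α

/-- The simple multisegment `{[b, e], [b+1, e+1], …, [b+n-1, e+n-1]}`. -/
def simpleMS (b e : ℤ) (n : ℕ) : Multiset (ℤ × ℤ) :=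
  (Multiset.range n).map fun k => (b + (k : ℤ), e + (k : ℤ))

/-- A multisegment is simple if it has the form `{[b,e], [b+1,e+1], …, [b+n-1, e+n-1]}`
with `b ≤ e` and `n ≥ 1`. -/
def IsSimple (α : Multiset (ℤ × ℤ)) : Prop :=
  ∃ (b e : ℤ) (n : ℕ), b ≤ e ∧ 1 ≤ n ∧ α = simpleMS b e n

/-- The union `⋃_{Δ ∈ α} Δ` of the segments of `α`, as a set of integers. -/
def unionSet (α : Multiset (ℤ × ℤ)) : Set ℤ := {x | ∃ p ∈ α, p.1 ≤ x ∧ x ≤ p.2}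

/-- `c_α`: the minimal number of segments whose union is `⋃_{Δ ∈ α} Δ`. -/
noncomputable def cNum (α : Multiset (ℤ × ℤ)) : ℕ :=
  sInf {n | ∃ β : Multiset (ℤ × ℤ), IsMultisegment β ∧ β.card = n ∧ unionSet β = unionSet α}

section AuxLemmas

lemma segLen_le_segLen {p q : ℤ × ℤ} (h1 : q.1 ≤ p.1) (h2 : p.2 ≤ q.2) :
    segLen p ≤ segLen q := by
  simp only [segLen]; omega

lemma one_le_segLen {p : ℤ × ℤ} (h : p.1 ≤ p.2) : 1 ≤ segLen p := by
  simp only [segLen]; omega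

lemma msSize_zero : msSize 0 = 0 := rfl

lemma msSize_add (a b : Multiset (ℤ × ℤ)) : msSize (a + b) = msSize a + msSize b := by
  simp [msSize]

lemma msSize_cons (p : ℤ × ℤ) (a : Multiset (ℤ × ℤ)) :
    msSize (p ::ₘ a) = segLen p + msSize a := by
  simp [msSize]

lemma msSize_singleton (p : ℤ × ℤ) : msSize {p} = segLen p := by
  simp [msSize]

lemma one_le_msSize {γ : Multiset (ℤ × ℤ)} (hγ : IsMultisegment γ) (h0 : γ ≠ 0) :
    1 ≤ msSize γ := by
  obtain ⟨p, hp⟩ := Multiset.exists_mem_of_ne_zero h0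
  obtain ⟨γ', rfl⟩ := Multiset.exists_cons_of_mem hp
  have := one_le_segLen (hγ p (Multiset.mem_cons_self _ _))
  rw [msSize_cons]; omega

lemma maxLen_le {γ : Multiset (ℤ × ℤ)} {N : ℕ} (h : ∀ p ∈ γ, segLen p ≤ N) :
    maxLen γ ≤ N := by
  simp only [maxLen]
  refine Multiset.sup_le.2 ?_
  intro x hx
  obtain ⟨p, hp, rfl⟩ := Multiset.mem_map.1 hx
  exact h p hp

lemma le_maxLen {γ : Multiset (ℤ × ℤ)} {p : ℤ × ℤ} (hp : p ∈ γ) : segLen p ≤ maxLen γ :=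
  Multiset.le_sup (Multiset.mem_map_of_mem _ hp)

lemma card_le_of_elemStep {a b : Multiset (ℤ × ℤ)} (h : ElemStep a b) :
    Multiset.card b ≤ Multiset.card a := by
  obtain ⟨p, q, rest, rfl, -, rfl⟩ := h
  simp only [Multiset.card_cons, Multiset.card_add]
  have : (interMS p q).card ≤ 1 := by unfold interMS; split <;> simp
  omega

lemma card_le_of_msLE {a b : Multiset (ℤ × ℤ)} (h : msLE a b) :
    Multiset.card b ≤ Multiset.card a := by
  induction h with
  | refl => exact le_refl _
  | tail _ hstep ih => exact (card_le_of_elemStep hstep).trans ih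

lemma maxLen_le_of_elemStep {a b : Multiset (ℤ × ℤ)} (h : ElemStep a b) :
    maxLen a ≤ maxLen b := by
  obtain ⟨p, q, rest, rfl, hl, rfl⟩ := h
  have hmem : (min p.1 q.1, max p.2 q.2) ∈
      (min p.1 q.1, max p.2 q.2) ::ₘ (interMS p q + rest) := Multiset.mem_cons_self _ _
  apply maxLen_le
  intro r hr
  rcases Multiset.mem_cons.1 hr with rfl | hr
  · exact (segLen_le_segLen (min_le_left _ _) (le_max_left _ _)).trans (le_maxLen hmem)
  rcases Multiset.mem_cons.1 hr with rfl | hr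
  · exact (segLen_le_segLen (min_le_right _ _) (le_max_right _ _)).trans (le_maxLen hmem)
  · exact le_maxLen (Multiset.mem_cons_of_mem (Multiset.mem_add.2 (Or.inr hr)))

lemma maxLen_le_of_msLE {a b : Multiset (ℤ × ℤ)} (h : msLE a b) :
    maxLen a ≤ maxLen b := by
  induction h with
  | refl => exact le_refl _
  | tail _ hstep ih => exact ih.trans (maxLen_le_of_elemStep hstep)

end AuxLemmas
section ChainLemmas

lemma mwChainAux_ne_nil (n : ℕ) (γ : Multiset (ℤ × ℤ)) (Δ : ℤ × ℤ) :
    mwChainAux n γ Δ ≠ [] := by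
  cases n with
  | zero => simp [mwChainAux]
  | succ n =>
    simp only [mwChainAux]
    split <;> simp

lemma next_mem {γ : Multiset (ℤ × ℤ)} {Δ : ℤ × ℤ}
    (h : (((γ.filter (fun p => p.2 = Δ.2 - 1 ∧ p.1 < Δ.1)).map Prod.fst).toFinset).Nonempty) :
    ((((γ.filter (fun p => p.2 = Δ.2 - 1 ∧ p.1 < Δ.1)).map Prod.fst).toFinset).max' h,
      Δ.2 - 1) ∈ γ := by
  have hm := Finset.max'_mem _ h
  rw [Multiset.mem_toFinset] at hm
  obtain ⟨q, hq, hq1⟩ := Multiset.mem_map.1 hm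
  rw [Multiset.mem_filter] at hq
  have : q = ((((γ.filter (fun p => p.2 = Δ.2 - 1 ∧ p.1 < Δ.1)).map Prod.fst).toFinset).max' h,
      Δ.2 - 1) := by
    ext
    · exact hq1
    · exact hq.2.1
  rw [← this]
  exact hq.1

lemma mwChainAux_mem {γ : Multiset (ℤ × ℤ)} :
    ∀ (n : ℕ) (Δ : ℤ × ℤ), Δ ∈ γ → ∀ p ∈ mwChainAux n γ Δ, p ∈ γ := by
  intro n
  induction n with
  | zero => intro Δ hΔ p hp; simp [mwChainAux] at hp; rwa [hp]
  | succ n ih =>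
    intro Δ hΔ p hp
    simp only [mwChainAux] at hp
    split at hp
    · rcases List.mem_cons.1 hp with rfl | hp
      · exact hΔ
      · exact ih _ (next_mem _) p hp
    · simp at hp; rwa [hp]

lemma mwChainAux_snd_le {γ : Multiset (ℤ × ℤ)} :
    ∀ (n : ℕ) (Δ : ℤ × ℤ), ∀ p ∈ mwChainAux n γ Δ, p.2 ≤ Δ.2 := by
  intro n
  induction n with
  | zero => intro Δ p hp; simp [mwChainAux] at hp; rw [hp]
  | succ n ih =>
    intro Δ p hp
    simp only [mwChainAux] at hp
    split at hp
    · rcases List.mem_cons.1 hp with rfl | hp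
      · exact le_refl _
      · have := ih _ p hp
        simp only at this
        omega
    · simp at hp; rw [hp]

lemma mwChainAux_nodup {γ : Multiset (ℤ × ℤ)} :
    ∀ (n : ℕ) (Δ : ℤ × ℤ), (mwChainAux n γ Δ).Nodup := by
  intro n
  induction n with
  | zero => intro Δ; simp [mwChainAux]
  | succ n ih =>
    intro Δ
    simp only [mwChainAux]
    split
    · refine List.nodup_cons.2 ⟨?_, ih _⟩
      intro hmem
      have := mwChainAux_snd_le _ _ _ hmem
      simp only at this
      omega
    · simp

lemma mwChain_spec {γ : Multiset (ℤ × ℤ)} (h0 : γ ≠ 0) :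
    ∃ Δ ∈ γ, mwChain γ = mwChainAux γ.card γ Δ := by
  simp only [mwChain]
  split
  · next h =>
    split
    · next hb =>
      refine ⟨_, ?_, rfl⟩
      have hm := Finset.max'_mem _ hb
      rw [Multiset.mem_toFinset] at hm
      obtain ⟨q, hq, hq1⟩ := Multiset.mem_map.1 hm
      rw [Multiset.mem_filter] at hq
      have : q = (((Multiset.filter (fun p => p.2 = (γ.map Prod.snd).toFinset.max' h)
          γ).map Prod.fst).toFinset.max' hb, (γ.map Prod.snd).toFinset.max' h) := by
        ext
        · exact hq1
        · exact hq.2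
      rw [← this]
      exact hq.1
    · next hb =>
      exfalso
      apply hb
      have he := Finset.max'_mem _ h
      rw [Multiset.mem_toFinset] at he
      obtain ⟨q, hq, hq2⟩ := Multiset.mem_map.1 he
      exact ⟨q.1, Multiset.mem_toFinset.2 (Multiset.mem_map.2
        ⟨q, Multiset.mem_filter.2 ⟨hq, hq2⟩, rfl⟩)⟩
  · next h =>
    exfalso
    apply h
    obtain ⟨p, hp⟩ := Multiset.exists_mem_of_ne_zero h0
    exact ⟨p.2, Multiset.mem_toFinset.2 (Multiset.mem_map.2 ⟨p, hp, rfl⟩)⟩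

lemma mwChain_mem {γ : Multiset (ℤ × ℤ)} (h0 : γ ≠ 0) : ∀ p ∈ mwChain γ, p ∈ γ := by
  obtain ⟨Δ, hΔ, heq⟩ := mwChain_spec h0
  rw [heq]
  exact mwChainAux_mem _ _ hΔ

lemma mwChain_nodup {γ : Multiset (ℤ × ℤ)} (h0 : γ ≠ 0) : (mwChain γ).Nodup := by
  obtain ⟨Δ, hΔ, heq⟩ := mwChain_spec h0
  rw [heq]
  exact mwChainAux_nodup _ _

lemma mwChain_ne_nil {γ : Multiset (ℤ × ℤ)} (h0 : γ ≠ 0) : mwChain γ ≠ [] := by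
  obtain ⟨Δ, hΔ, heq⟩ := mwChain_spec h0
  rw [heq]
  exact mwChainAux_ne_nil _ _ _

lemma mwChain_le {γ : Multiset (ℤ × ℤ)} (h0 : γ ≠ 0) : ↑(mwChain γ) ≤ γ := by
  rw [Multiset.le_iff_count]
  intro a
  have hnd : (↑(mwChain γ) : Multiset (ℤ × ℤ)).Nodup := Multiset.coe_nodup.2 (mwChain_nodup h0)
  by_cases ha : a ∈ mwChain γ
  · have h1 : Multiset.count a ↑(mwChain γ) ≤ 1 := Multiset.nodup_iff_count_le_one.1 hnd a
    have h2 : 1 ≤ γ.count a := Multiset.one_le_count_iff_mem.2 (mwChain_mem h0 a ha)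
    omega
  · have : Multiset.count a ↑(mwChain γ) = 0 := Multiset.count_eq_zero.2 (by simpa using ha)
    omega

end ChainLemmas
section ResidualLemmas

lemma msSize_bind_shrink :
    ∀ l : List (ℤ × ℤ), (∀ p ∈ l, p.1 ≤ p.2) →
      msSize ((↑l : Multiset (ℤ × ℤ)).bind mwShrink) + l.length = msSize ↑l := by
  intro l
  induction l with
  | nil => intro _; simp [msSize]
  | cons a l ih =>
    intro h
    have ha : a.1 ≤ a.2 := h a List.mem_cons_self
    have hl := ih (fun p hp => h p (List.mem_cons_of_mem _ hp))
    have hcoe : (↑(a :: l) : Multiset (ℤ × ℤ)) = a ::ₘ ↑l := rfl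
    rw [hcoe, Multiset.cons_bind, msSize_add, msSize_cons, List.length_cons]
    have hshrink : msSize (mwShrink a) + 1 = segLen a := by
      unfold mwShrink
      split
      · rw [msSize_singleton]; simp only [segLen]; omega
      · rw [msSize_zero]; simp only [segLen]; omega
    omega

lemma isMultisegment_mwResidual {γ : Multiset (ℤ × ℤ)} (hγ : IsMultisegment γ) :
    IsMultisegment (mwResidual γ) := by
  intro p hp
  rw [mwResidual, Multiset.mem_add] at hp
  rcases hp with hp | hp
  · exact hγ p (Multiset.mem_of_le (tsub_le_self) hp)
  · obtain ⟨a, ha, hpa⟩ := Multiset.mem_bind.1 hp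
    unfold mwShrink at hpa
    split at hpa
    · next hcond =>
      rw [Multiset.mem_singleton] at hpa
      rw [hpa]
      exact hcond
    · simp at hpa

lemma msSize_sub_add {γ c : Multiset (ℤ × ℤ)} (h : c ≤ γ) :
    msSize (γ - c) + msSize c = msSize γ := by
  rw [← msSize_add, tsub_add_cancel_of_le h]

lemma msSize_mwResidual_lt {γ : Multiset (ℤ × ℤ)} (hγ : IsMultisegment γ) (h0 : γ ≠ 0) :
    msSize (mwResidual γ) < msSize γ := by
  have hle := mwChain_le h0
  have h1 := msSize_sub_add hle
  have h2 := msSize_bind_shrink (mwChain γ) (fun p hp => hγ p (mwChain_mem h0 p hp))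
  have h3 : 1 ≤ (mwChain γ).length := by
    have := mwChain_ne_nil h0
    cases hl : mwChain γ with
    | nil => exact absurd hl this
    | cons a l => simp
  rw [mwResidual, msSize_add]
  omega

lemma tildeAux_zero : ∀ k : ℕ, tildeAux k 0 = 0 := by
  intro k
  cases k with
  | zero => rfl
  | succ k => simp [tildeAux]

lemma msSize_eq_zero {γ : Multiset (ℤ × ℤ)} (hγ : IsMultisegment γ) (h : msSize γ = 0) :
    γ = 0 := by
  by_contra h0
  have := one_le_msSize hγ h0
  omega

lemma tildeAux_congr : ∀ (k : ℕ) (k' : ℕ) (γ : Multiset (ℤ × ℤ)), IsMultisegment γ →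
    msSize γ ≤ k → msSize γ ≤ k' → tildeAux k γ = tildeAux k' γ := by
  intro k
  induction k with
  | zero =>
    intro k' γ hγ hk _
    have : γ = 0 := msSize_eq_zero hγ (by omega)
    rw [this, tildeAux_zero, tildeAux_zero]
  | succ k ih =>
    intro k' γ hγ hk hk'
    by_cases h0 : γ = 0
    · rw [h0, tildeAux_zero, tildeAux_zero]
    · have h1 := one_le_msSize hγ h0
      have hlt := msSize_mwResidual_lt hγ h0
      obtain ⟨k'', rfl⟩ : ∃ k'', k' = k'' + 1 := ⟨k' - 1, by omega⟩
      simp only [tildeAux, if_neg h0]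
      congr 1
      exact ih k'' (mwResidual γ) (isMultisegment_mwResidual hγ) (by omega) (by omega)

lemma tilde_zero : tilde 0 = 0 := rfl

lemma tilde_cons {γ : Multiset (ℤ × ℤ)} (hγ : IsMultisegment γ) (h0 : γ ≠ 0) :
    tilde γ = mwSegment γ ::ₘ tilde (mwResidual γ) := by
  have h1 := one_le_msSize hγ h0
  have hlt := msSize_mwResidual_lt hγ h0
  obtain ⟨k, hk⟩ : ∃ k, msSize γ = k + 1 := ⟨msSize γ - 1, by omega⟩
  rw [tilde, hk]
  simp only [tildeAux, if_neg h0]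
  congr 1
  rw [tilde]
  exact tildeAux_congr k (msSize (mwResidual γ)) (mwResidual γ)
    (isMultisegment_mwResidual hγ) (by omega) (le_refl _)

lemma maxLen_le_mwResidual {γ : Multiset (ℤ × ℤ)} (hγ : IsMultisegment γ) (h0 : γ ≠ 0) :
    maxLen γ ≤ maxLen (mwResidual γ) + 1 := by
  apply maxLen_le
  intro p hp
  by_cases hs : p ∈ γ - ↑(mwChain γ)
  · have : p ∈ mwResidual γ := Multiset.mem_add.2 (Or.inl hs)
    have := le_maxLen this
    omega
  · have hcount : Multiset.count p (γ - ↑(mwChain γ)) = 0 := Multiset.count_eq_zero.2 hs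
    rw [Multiset.count_sub] at hcount
    have h1 : 1 ≤ Multiset.count p γ := Multiset.one_le_count_iff_mem.2 hp
    have h2 : 1 ≤ Multiset.count p (↑(mwChain γ) : Multiset (ℤ × ℤ)) := by omega
    have hpc : p ∈ mwChain γ := by
      have := Multiset.one_le_count_iff_mem.1 h2
      simpa using this
    by_cases hlen : segLen p ≤ 1
    · omega
    · have hp12 : p.1 ≤ p.2 - 1 := by
        have := hγ p hp
        simp only [segLen] at hlen
        omega
      have hmem : (p.1, p.2 - 1) ∈ mwResidual γ := by
        refine Multiset.mem_add.2 (Or.inr ?_)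
        refine Multiset.mem_bind.2 ⟨p, by simpa using hpc, ?_⟩
        unfold mwShrink
        rw [if_pos hp12]
        simp
      have := le_maxLen hmem
      simp only [segLen] at this ⊢
      omega

lemma maxLen_le_card_tilde_aux : ∀ (N : ℕ) (γ : Multiset (ℤ × ℤ)), IsMultisegment γ →
    msSize γ ≤ N → maxLen γ ≤ (tilde γ).card := by
  intro N
  induction N with
  | zero =>
    intro γ hγ hN
    have : γ = 0 := msSize_eq_zero hγ (by omega)
    rw [this]
    simp [maxLen, tilde_zero]
  | succ N ih =>
    intro γ hγ hN
    by_cases h0 : γ = 0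
    · rw [h0]; simp [maxLen, tilde_zero]
    · have hlt := msSize_mwResidual_lt hγ h0
      have h1 := one_le_msSize hγ h0
      rw [tilde_cons hγ h0, Multiset.card_cons]
      have := ih (mwResidual γ) (isMultisegment_mwResidual hγ) (by omega)
      have := maxLen_le_mwResidual hγ h0
      omega

lemma maxLen_le_card_tilde {γ : Multiset (ℤ × ℤ)} (hγ : IsMultisegment γ) :
    maxLen γ ≤ (tilde γ).card :=
  maxLen_le_card_tilde_aux (msSize γ) γ hγ (le_refl _)

end ResidualLemmas
section SimpleLemmas

lemma mem_simpleMS {b e : ℤ} {n : ℕ} {p : ℤ × ℤ} :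
    p ∈ simpleMS b e n ↔ ∃ k, k < n ∧ (b + (k : ℤ), e + (k : ℤ)) = p := by
  simp [simpleMS, Multiset.mem_map, Multiset.mem_range]

lemma simpleMS_card (b e : ℤ) (n : ℕ) : (simpleMS b e n).card = n := by
  simp [simpleMS]

lemma simpleMS_ne_zero (b e : ℤ) {n : ℕ} (hn : 1 ≤ n) : simpleMS b e n ≠ 0 := by
  intro h
  have := simpleMS_card b e n
  rw [h] at this
  simp at this
  omega

lemma isMultisegment_simpleMS {b e : ℤ} (hbe : b ≤ e) (n : ℕ) :
    IsMultisegment (simpleMS b e n) := by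
  intro p hp
  obtain ⟨k, -, rfl⟩ := mem_simpleMS.1 hp
  simp
  omega

lemma simpleMS_succ (b e : ℤ) (n : ℕ) :
    simpleMS b e (n + 1) = (b + (n : ℤ), e + (n : ℤ)) ::ₘ simpleMS b e n := by
  simp [simpleMS, Multiset.range_succ]

def chainList (b e : ℤ) : ℕ → List (ℤ × ℤ)
  | 0 => [(b, e)]
  | j + 1 => (b + (j : ℤ) + 1, e + (j : ℤ) + 1) :: chainList b e j

lemma chainList_coe (b e : ℤ) :
    ∀ j : ℕ, (↑(chainList b e j) : Multiset (ℤ × ℤ)) = simpleMS b e (j + 1) := by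
  intro j
  induction j with
  | zero => simp [chainList, simpleMS]
  | succ j ih =>
    have h1 : (↑(chainList b e (j + 1)) : Multiset (ℤ × ℤ))
        = (b + (j : ℤ) + 1, e + (j : ℤ) + 1) ::ₘ ↑(chainList b e j) := rfl
    have hb' : b + ((j + 1 : ℕ) : ℤ) = b + (j : ℤ) + 1 := by push_cast; ring
    have he' : e + ((j + 1 : ℕ) : ℤ) = e + (j : ℤ) + 1 := by push_cast; ring
    rw [h1, ih, simpleMS_succ b e (j + 1), hb', he']

lemma filter_simpleMS_none (b e c d : ℤ) (n : ℕ) (hd : ∀ k : ℕ, k < n → d ≠ e + (k : ℤ)) :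
    (simpleMS b e n).filter (fun p => p.2 = d ∧ p.1 < c) = 0 := by
  rw [Multiset.filter_eq_nil]
  intro p hp
  obtain ⟨k, hk, rfl⟩ := mem_simpleMS.1 hp
  intro hcon
  exact hd k hk (by simpa using hcon.1.symm)

lemma filter_simpleMS (b e c d : ℤ) (j : ℕ) (hd : d = e + (j : ℤ)) (hc : b + (j : ℤ) < c) :
    ∀ n : ℕ, j < n →
      (simpleMS b e n).filter (fun p => p.2 = d ∧ p.1 < c) = {(b + (j : ℤ), e + (j : ℤ))} := by
  intro n
  induction n with
  | zero => omega
  | succ n ih =>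
    intro hj
    rw [simpleMS_succ]
    by_cases hjn : j = n
    · rcases hjn with rfl
      rw [Multiset.filter_cons_of_pos _ (by exact ⟨by simp [hd], by simpa using hc⟩)]
      rw [filter_simpleMS_none b e c d j (fun k hk => by omega)]
      rfl
    · rw [Multiset.filter_cons_of_neg _ (by simp [hd]; omega)]
      exact ih (by omega)

lemma mwChainAux_simple (b e : ℤ) (n : ℕ) :
    ∀ (j : ℕ) (fuel : ℕ), j < n → j ≤ fuel →
      mwChainAux fuel (simpleMS b e n) (b + (j : ℤ), e + (j : ℤ)) = chainList b e j := by
  intro j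
  induction j with
  | zero =>
    intro fuel _ _
    cases fuel with
    | zero => simp [mwChainAux, chainList]
    | succ f =>
      simp only [mwChainAux]
      have h0 : Multiset.filter
          (fun x : ℤ × ℤ => x.2 = e + ((0 : ℕ) : ℤ) - 1 ∧ x.1 < b + ((0 : ℕ) : ℤ))
          (simpleMS b e n) = 0 :=
        filter_simpleMS_none b e _ _ n (fun k hk => by push_cast; omega)
      simp only [h0]
      simp [chainList]
  | succ j ih =>
    intro fuel hjn hfuel
    obtain ⟨f, rfl⟩ : ∃ f, fuel = f + 1 := ⟨fuel - 1, by omega⟩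
    simp only [mwChainAux]
    have hfil : Multiset.filter
        (fun x : ℤ × ℤ => x.2 = e + (((j : ℕ) + 1 : ℕ) : ℤ) - 1 ∧ x.1 < b + (((j : ℕ) + 1 : ℕ) : ℤ))
        (simpleMS b e n) = {(b + (j : ℤ), e + (j : ℤ))} :=
      filter_simpleMS b e _ _ j (by push_cast; ring) (by push_cast; omega) n (by omega)
    simp only [hfil]
    rw [dif_pos (by simp)]
    have hmax : ((({(b + (j : ℤ), e + (j : ℤ))} : Multiset (ℤ × ℤ)).map
        (fun x => x.1)).toFinset.max' (by simp)) = b + (j : ℤ) := by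
      simp only [Multiset.map_singleton, Multiset.toFinset_singleton]
      exact Finset.max'_singleton _
    rw [hmax]
    have h2 : e + (((j : ℕ) + 1 : ℕ) : ℤ) - 1 = e + (j : ℤ) := by push_cast; ring
    rw [h2, ih f (by omega) (by omega)]
    have hb' : b + (((j : ℕ) + 1 : ℕ) : ℤ) = b + (j : ℤ) + 1 := by push_cast; ring
    have he' : e + (((j : ℕ) + 1 : ℕ) : ℤ) = e + (j : ℤ) + 1 := by push_cast; ring
    rw [hb', he']
    rfl

end SimpleLemmas
section SimpleChain

lemma mwChain_eq {γ : Multiset (ℤ × ℤ)} {Δ : ℤ × ℤ} (hΔ : Δ ∈ γ)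
    (hmax : ∀ q ∈ γ, q.2 ≤ Δ.2) (hbase : ∀ q ∈ γ, q.2 = Δ.2 → q.1 ≤ Δ.1) :
    mwChain γ = mwChainAux γ.card γ Δ := by
  have hend : ∀ h : ((γ.map Prod.snd).toFinset).Nonempty,
      (γ.map Prod.snd).toFinset.max' h = Δ.2 := by
    intro h
    apply le_antisymm
    · apply Finset.max'_le
      intro y hy
      rw [Multiset.mem_toFinset] at hy
      obtain ⟨q, hq, rfl⟩ := Multiset.mem_map.1 hy
      exact hmax q hq
    · exact Finset.le_max' _ _ (Multiset.mem_toFinset.2 (Multiset.mem_map.2 ⟨Δ, hΔ, rfl⟩))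
  simp only [mwChain]
  split
  · next h =>
    split
    · next hb =>
      have h2 := hend h
      have hpair : (((Multiset.filter (fun p => p.2 = (γ.map Prod.snd).toFinset.max' h) γ).map
          Prod.fst).toFinset.max' hb, (γ.map Prod.snd).toFinset.max' h) = Δ := by
        have hfst : ((Multiset.filter (fun p => p.2 = (γ.map Prod.snd).toFinset.max' h) γ).map
            Prod.fst).toFinset.max' hb = Δ.1 := by
          apply le_antisymm
          · apply Finset.max'_le
            intro y hy
            rw [Multiset.mem_toFinset] at hy
            obtain ⟨q, hq, rfl⟩ := Multiset.mem_map.1 hy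
            rw [Multiset.mem_filter] at hq
            exact hbase q hq.1 (by rw [← h2]; exact hq.2)
          · apply Finset.le_max'
            rw [Multiset.mem_toFinset]
            exact Multiset.mem_map.2 ⟨Δ, Multiset.mem_filter.2 ⟨hΔ, by rw [h2]⟩, rfl⟩
        ext
        · exact hfst
        · exact h2
      rw [hpair]
    · next hb =>
      exfalso
      apply hb
      refine ⟨Δ.1, Multiset.mem_toFinset.2 (Multiset.mem_map.2
        ⟨Δ, Multiset.mem_filter.2 ⟨hΔ, (hend h).symm⟩, rfl⟩)⟩
  · next h =>
    exact absurd ⟨Δ.2, Multiset.mem_toFinset.2 (Multiset.mem_map.2 ⟨Δ, hΔ, rfl⟩)⟩ h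

lemma mwChain_simple (b e : ℤ) {n : ℕ} (hn : 1 ≤ n) :
    mwChain (simpleMS b e n) = chainList b e (n - 1) := by
  have hmem : ((b + ((n - 1 : ℕ) : ℤ), e + ((n - 1 : ℕ) : ℤ)) : ℤ × ℤ) ∈ simpleMS b e n :=
    mem_simpleMS.2 ⟨n - 1, by omega, rfl⟩
  have hchain := mwChain_eq hmem ?_ ?_
  · rw [hchain, simpleMS_card]
    exact mwChainAux_simple b e n (n - 1) n (by omega) (by omega)
  · intro q hq
    obtain ⟨k, hk, rfl⟩ := mem_simpleMS.1 hq
    simp only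
    omega
  · intro q hq _
    obtain ⟨k, hk, rfl⟩ := mem_simpleMS.1 hq
    simp only
    omega

lemma bind_shrink_simple (b e : ℤ) :
    ∀ n : ℕ, (simpleMS b e n).bind mwShrink
      = if b ≤ e - 1 then simpleMS b (e - 1) n else 0 := by
  intro n
  induction n with
  | zero =>
    have : simpleMS b e 0 = 0 := by simp [simpleMS]
    rw [this, Multiset.zero_bind]
    split <;> simp [simpleMS]
  | succ n ih =>
    rw [simpleMS_succ, Multiset.cons_bind, ih]
    have hshrink : mwShrink (b + (n : ℤ), e + (n : ℤ))
        = if b ≤ e - 1 then {(b + (n : ℤ), e - 1 + (n : ℤ))} else 0 := by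
      unfold mwShrink
      by_cases hbe1 : b ≤ e - 1
      · rw [if_pos hbe1, if_pos (by simp; omega)]
        congr 2
        ring
      · rw [if_neg hbe1, if_neg (by simp; omega)]
    rw [hshrink]
    by_cases hbe1 : b ≤ e - 1
    · rw [if_pos hbe1, if_pos hbe1, if_pos hbe1, simpleMS_succ]
      simp
    · rw [if_neg hbe1, if_neg hbe1, if_neg hbe1]
      simp

lemma mwResidual_simple (b e : ℤ) {n : ℕ} (hn : 1 ≤ n) :
    mwResidual (simpleMS b e n)
      = if b ≤ e - 1 then simpleMS b (e - 1) n else 0 := by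
  rw [mwResidual, mwChain_simple b e hn, chainList_coe]
  have hnn : n - 1 + 1 = n := by omega
  rw [hnn, tsub_self, bind_shrink_simple, zero_add]

lemma card_tilde_simple (b : ℤ) {n : ℕ} (hn : 1 ≤ n) :
    ∀ (m : ℕ) (e : ℤ), b ≤ e → (e - b).toNat = m →
      (tilde (simpleMS b e n)).card = m + 1 := by
  intro m
  induction m with
  | zero =>
    intro e hbe hm
    have he : e = b := by omega
    subst he
    rw [tilde_cons (isMultisegment_simpleMS hbe n) (simpleMS_ne_zero _ _ hn)]
    rw [mwResidual_simple _ _ hn, if_neg (by omega), tilde_zero]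
    simp
  | succ m ih =>
    intro e hbe hm
    rw [tilde_cons (isMultisegment_simpleMS hbe n) (simpleMS_ne_zero _ _ hn)]
    rw [mwResidual_simple _ _ hn, if_pos (by omega)]
    rw [Multiset.card_cons, ih (e - 1) (by omega) (by omega)]

end SimpleChain

/-- If `α` is simple, `α ≤ β` and `α~ ≤ β~`, then `α = β`. -/
theorem eq_of_simple_of_msLE_of_tilde_msLE (α β : Multiset (ℤ × ℤ))
    (hα : IsSimple α) (hβ : IsMultisegment β)
    (h : msLE α β) (ht : msLE (tilde α) (tilde β)) :
    α = β := by
  obtain ⟨b, e, n, hbe, hn, rfl⟩ := hα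
  rcases Relation.ReflTransGen.cases_head h with rfl | ⟨γ, hstep, hγβ⟩
  · rfl
  exfalso
  have hc2 : (tilde (simpleMS b e n)).card = (e - b).toNat + 1 :=
    card_tilde_simple b hn (e - b).toNat e hbe rfl
  have hc1 : (tilde β).card ≤ (tilde (simpleMS b e n)).card := card_le_of_msLE ht
  have hc3 : maxLen β ≤ (tilde β).card := maxLen_le_card_tilde hβ
  have hc5 : maxLen γ ≤ maxLen β := maxLen_le_of_msLE hγβ
  obtain ⟨p, q, rest, heq, hl, hγeq⟩ := hstep
  subst hγeq
  have hp : p ∈ simpleMS b e n := by rw [heq]; exact Multiset.mem_cons_self _ _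
  have hq : q ∈ simpleMS b e n := by
    rw [heq]; exact Multiset.mem_cons_of_mem (Multiset.mem_cons_self _ _)
  obtain ⟨i, hi, hpi⟩ := mem_simpleMS.1 hp
  obtain ⟨j, hj, hqj⟩ := mem_simpleMS.1 hq
  have hp1 : p.1 = b + (i : ℤ) := by rw [← hpi]
  have hp2 : p.2 = e + (i : ℤ) := by rw [← hpi]
  have hq1 : q.1 = b + (j : ℤ) := by rw [← hqj]
  have hq2 : q.2 = e + (j : ℤ) := by rw [← hqj]
  have hij : (i : ℤ) ≠ (j : ℤ) := by
    intro hcon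
    apply hl.2.2.1
    have hqp : q = p := by rw [← hpi, ← hqj, hcon]
    rw [hqp]
    simp
  have hu_le : (e - b).toNat + 2 ≤ segLen (min p.1 q.1, max p.2 q.2) := by
    rw [hp1, hp2, hq1, hq2]
    rcases le_total (i : ℤ) (j : ℤ) with hle | hle
    · rw [min_eq_left (by omega), max_eq_right (by omega)]
      simp only [segLen]
      omega
    · rw [min_eq_right (by omega), max_eq_left (by omega)]
      simp only [segLen]
      omega
  have hc4 : (e - b).toNat + 2 ≤ maxLen ((min p.1 q.1, max p.2 q.2) ::ₘ (interMS p q + rest)) :=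
    hu_le.trans (le_maxLen (Multiset.mem_cons_self _ _))
  omega
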